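/- Let n ≥ 1 and let U : ℝⁿ → ℝⁿ be a continuous vector field such that for every m ∈ ℝⁿ and each index i: Uᵢ(m) > 0 whenever mᵢ < 1, Uᵢ(m) < 0 whenever mᵢ > 1, and Uᵢ(m) = 0 whenever mᵢ = 1. Then every bounded global solution m : [0,∞) → ℝⁿ of m'(t) = U(m(t)) converges as t → ∞ to the all-ones vector (1, 1, …, 1). -/

import Mathlib

/-- Forward invariance of `{f ≥ c}` when `f' > 0 below the threshold `c`. -/
lemma fpdc_inv_ge (f φ : ℝ → ℝ) (a c t0 : ℝ) (ha : a ≤ t0)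
    (hf : ∀ t, a ≤ t → HasDerivAt f (φ t) t)
    (hφ : ∀ t, a ≤ t → f t < c → 0 < φ t)
    (h0 : c ≤ f t0) : ∀ t, t0 ≤ t → c ≤ f t := by
  intro t1 ht1
  by_contra hcon
  push_neg at hcon
  have ht01 : t0 < t1 := by
    rcases lt_or_eq_of_le ht1 with h | h
    · exact h
    · exfalso; rw [← h] at hcon; linarith
  set S : Set ℝ := Set.Icc t0 t1 ∩ f ⁻¹' Set.Ici c with hSdef
  have hcont : ContinuousOn f (Set.Icc t0 t1) := fun x hx =>
    ((hf x (le_trans ha hx.1)).continuousAt).continuousWithinAt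
  have hSclosed : IsClosed S :=
    hcont.preimage_isClosed_of_isClosed isClosed_Icc isClosed_Ici
  have hSne : S.Nonempty := ⟨t0, ⟨le_refl _, le_of_lt ht01⟩, h0⟩
  have hSbdd : BddAbove S := ⟨t1, fun x hx => hx.1.2⟩
  set s := sSup S with hsdef
  have hsS : s ∈ S := hSclosed.csSup_mem hSne hSbdd
  have hs1 : s ≤ t1 := hsS.1.2
  have hs0 : t0 ≤ s := hsS.1.1
  have hfs : c ≤ f s := hsS.2
  have hst1 : s < t1 := by
    rcases lt_or_eq_of_le hs1 with h | h
    · exact h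
    · exfalso; rw [h] at hfs; linarith
  have hlt : ∀ x, s < x → x ≤ t1 → f x < c := by
    intro x hx hx1
    by_contra hge
    push_neg at hge
    have : x ∈ S := ⟨⟨le_trans hs0 (le_of_lt hx), hx1⟩, hge⟩
    exact absurd (le_csSup hSbdd this) (not_le.mpr hx)
  have hmono : StrictMonoOn f (Set.Icc s t1) := by
    apply strictMonoOn_of_deriv_pos (convex_Icc s t1)
    · exact hcont.mono (Set.Icc_subset_Icc hs0 le_rfl)
    · intro x hx
      rw [interior_Icc] at hx
      have hax : a ≤ x := le_trans (le_trans ha hs0) (le_of_lt hx.1)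
      rw [(hf x hax).deriv]
      exact hφ x hax (hlt x hx.1 (le_of_lt hx.2))
  have : f s < f t1 :=
    hmono ⟨le_rfl, le_of_lt hst1⟩ ⟨le_of_lt hst1, le_rfl⟩ hst1
  linarith

/-- Linear growth when the derivative is bounded below. -/
lemma fpdc_grow (f φ : ℝ → ℝ) (δ : ℝ)
    (hf : ∀ t, 0 ≤ t → HasDerivAt f (φ t) t)
    (hδ : ∀ t, 0 ≤ t → δ ≤ φ t) : ∀ t, 0 ≤ t → f 0 + δ * t ≤ f t := by
  intro t ht
  set g : ℝ → ℝ := fun x => f x - δ * x with hgdef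
  have hg : ∀ x, 0 ≤ x → HasDerivAt g (φ x - δ) x := by
    intro x hx
    have h2 : HasDerivAt (fun y : ℝ => δ * y) (δ * 1) x :=
      (hasDerivAt_id x).const_mul δ
    have h3 : HasDerivAt (fun y : ℝ => δ * y) δ x := by simpa using h2
    exact (hf x hx).sub h3
  have hmono : MonotoneOn g (Set.Ici (0 : ℝ)) := by
    apply monotoneOn_of_deriv_nonneg (convex_Ici 0)
    · exact fun x hx => ((hg x hx).continuousAt).continuousWithinAt
    · intro x hx
      rw [interior_Ici] at hx
      exact ((hg x (le_of_lt hx)).differentiableAt).differentiableWithinAt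
    · intro x hx
      rw [interior_Ici] at hx
      rw [(hg x (le_of_lt hx)).deriv]
      linarith [hδ x (le_of_lt hx)]
  have := hmono (Set.self_mem_Ici) (Set.mem_Ici.mpr ht) ht
  simp only [hgdef] at this
  linarith [this]

/-- A bounded solution that pushes up below `1` is eventually above `1 - ε`. -/
lemma fpdc_up (f φ : ℝ → ℝ) (B : ℝ)
    (hf : ∀ t, 0 ≤ t → HasDerivAt f (φ t) t)
    (hpos : ∀ t, 0 ≤ t → f t < 1 → 0 < φ t)
    (hB : ∀ t, 0 ≤ t → f t ≤ B)
    (hmin : ∀ c, c < 1 → (∀ t, 0 ≤ t → f t ≤ c) →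
      ∃ δ, 0 < δ ∧ ∀ t, 0 ≤ t → δ ≤ φ t)
    (ε : ℝ) (hε : 0 < ε) : ∃ t0, 0 ≤ t0 ∧ ∀ t, t0 ≤ t → 1 - ε < f t := by
  by_cases h : ∀ t, 0 ≤ t → f t ≤ 1 - ε
  · exfalso
    obtain ⟨δ, hδpos, hδ⟩ := hmin (1 - ε) (by linarith) h
    set T : ℝ := max 0 ((B - f 0) / δ + 1) with hTdef
    have hT0 : 0 ≤ T := le_max_left _ _
    have hgrow := fpdc_grow f φ δ hf hδ T hT0
    have hT1 : (B - f 0) / δ + 1 ≤ T := le_max_right _ _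
    have : δ * ((B - f 0) / δ + 1) ≤ δ * T :=
      mul_le_mul_of_nonneg_left hT1 (le_of_lt hδpos)
    have heq : δ * ((B - f 0) / δ + 1) = B - f 0 + δ := by
      field_simp
    have hBT := hB T hT0
    nlinarith
  · push_neg at h
    obtain ⟨t0, ht0, hft0⟩ := h
    by_cases hcase : f t0 < 1
    · refine ⟨t0, ht0, fun t ht => ?_⟩
      have := fpdc_inv_ge f φ 0 (f t0) t0 ht0 hf
        (fun s hs hfs => hpos s hs (lt_trans hfs hcase)) le_rfl t ht
      linarith
    · push_neg at hcase
      refine ⟨t0, ht0, fun t ht => ?_⟩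
      have := fpdc_inv_ge f φ 0 1 t0 ht0 hf
        (fun s hs hfs => hpos s hs hfs) hcase t ht
      linarith

/-- First-price auction dynamics: if `U` is a continuous vector field on ℝⁿ
with `Uᵢ(m) > 0` for `mᵢ < 1`, `Uᵢ(m) < 0` for `mᵢ > 1` and `Uᵢ(m) = 0` for
`mᵢ = 1`, then every bounded global solution of `m' = U m` converges to the
all-ones vector. -/
theorem first_price_dynamics_converge
    (n : ℕ) (hn : 1 ≤ n)
    (U : (Fin n → ℝ) → (Fin n → ℝ))
    (hU : Continuous U)
    (hpos : ∀ (m : Fin n → ℝ) (i : Fin n), m i < 1 → 0 < U m i)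
    (hneg : ∀ (m : Fin n → ℝ) (i : Fin n), 1 < m i → U m i < 0)
    (hzero : ∀ (m : Fin n → ℝ) (i : Fin n), m i = 1 → U m i = 0)
    (m : ℝ → (Fin n → ℝ))
    (hm : ∀ t : ℝ, 0 ≤ t → HasDerivAt m (U (m t)) t)
    (hbdd : Bornology.IsBounded (m '' Set.Ici (0 : ℝ))) :
    Filter.Tendsto m Filter.atTop (nhds (fun _ => (1 : ℝ))) := by
  rw [tendsto_pi_nhds]
  intro i
  -- component function and its derivative
  set f : ℝ → ℝ := fun t => m t i with hfdef
  set φ : ℝ → ℝ := fun t => U (m t) i with hφdef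
  have hf : ∀ t, 0 ≤ t → HasDerivAt f (φ t) t := fun t ht =>
    (hasDerivAt_pi.mp (hm t ht)) i
  -- bound on the trajectory
  obtain ⟨R, hR⟩ := hbdd.subset_closedBall 0
  have hRnorm : ∀ t, 0 ≤ t → ‖m t‖ ≤ R := by
    intro t ht
    have : m t ∈ Metric.closedBall (0 : Fin n → ℝ) R :=
      hR ⟨t, ht, rfl⟩
    simpa [Metric.mem_closedBall, dist_zero_right] using this
  have habs : ∀ t, 0 ≤ t → |f t| ≤ R := by
    intro t ht
    calc |f t| = ‖m t i‖ := (Real.norm_eq_abs _).symm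
      _ ≤ ‖m t‖ := norm_le_pi_norm (m t) i
      _ ≤ R := hRnorm t ht
  -- compact closure of the trajectory
  set K : Set (Fin n → ℝ) := closure (m '' Set.Ici (0 : ℝ)) with hKdef
  have hKcomp : IsCompact K :=
    Metric.isCompact_of_isClosed_isBounded isClosed_closure hbdd.closure
  have hmemK : ∀ t, 0 ≤ t → m t ∈ K := fun t ht =>
    subset_closure ⟨t, ht, rfl⟩
  have hUci : Continuous (fun x : Fin n → ℝ => U x i) :=
    (continuous_apply i).comp hU
  -- lower convergence: eventually f t > 1 - ε
  have hlow : ∀ ε, 0 < ε → ∃ t0, 0 ≤ t0 ∧ ∀ t, t0 ≤ t → 1 - ε < f t := by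
    apply fpdc_up f φ R hf (fun t ht h => hpos (m t) i h)
      (fun t ht => (abs_le.mp (habs t ht)).2)
    intro c hc hfc
    set K' : Set (Fin n → ℝ) := K ∩ {x | x i ≤ c} with hK'def
    have hK'comp : IsCompact K' :=
      hKcomp.inter_right (isClosed_le (continuous_apply i) continuous_const)
    have hK'ne : K'.Nonempty := ⟨m 0, hmemK 0 le_rfl, hfc 0 le_rfl⟩
    obtain ⟨x0, hx0K, hx0min⟩ :=
      hK'comp.exists_isMinOn hK'ne (hUci.continuousOn)
    have hδpos : 0 < U x0 i := hpos x0 i (lt_of_le_of_lt hx0K.2 hc)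
    refine ⟨U x0 i, hδpos, fun t ht => ?_⟩
    exact hx0min ⟨hmemK t ht, hfc t ht⟩
  -- upper convergence: eventually f t < 1 + ε, via the reflected function
  have hhigh : ∀ ε, 0 < ε → ∃ t0, 0 ≤ t0 ∧ ∀ t, t0 ≤ t → f t < 1 + ε := by
    intro ε hε
    set g : ℝ → ℝ := fun t => 2 - f t with hgdef
    set ψ : ℝ → ℝ := fun t => -φ t with hψdef
    have hg : ∀ t, 0 ≤ t → HasDerivAt g (ψ t) t := by
      intro t ht
      simpa [hgdef, hψdef] using (hf t ht).const_sub 2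
    have hgpos : ∀ t, 0 ≤ t → g t < 1 → 0 < ψ t := by
      intro t ht hgt
      have : 1 < f t := by simp only [hgdef] at hgt; linarith
      have := hneg (m t) i this
      simp only [hψdef]; linarith
    have hgB : ∀ t, 0 ≤ t → g t ≤ 2 + R := by
      intro t ht
      have := (abs_le.mp (habs t ht)).1
      simp only [hgdef]; linarith
    have hgmin : ∀ c, c < 1 → (∀ t, 0 ≤ t → g t ≤ c) →
        ∃ δ, 0 < δ ∧ ∀ t, 0 ≤ t → δ ≤ ψ t := by
      intro c hc hgc
      have hfc : ∀ t, 0 ≤ t → 2 - c ≤ f t := by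
        intro t ht
        have := hgc t ht
        simp only [hgdef] at this; linarith
      set K' : Set (Fin n → ℝ) := K ∩ {x | 2 - c ≤ x i} with hK'def
      have hK'comp : IsCompact K' :=
        hKcomp.inter_right (isClosed_le continuous_const (continuous_apply i))
      have hK'ne : K'.Nonempty := ⟨m 0, hmemK 0 le_rfl, hfc 0 le_rfl⟩
      obtain ⟨x0, hx0K, hx0min⟩ :=
        hK'comp.exists_isMinOn hK'ne (hUci.neg.continuousOn)
      have hx0gt : 1 < x0 i := by
        have := hx0K.2
        simp only [Set.mem_setOf_eq] at this
        linarith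
      have hδpos : 0 < -U x0 i := by linarith [hneg x0 i hx0gt]
      refine ⟨-U x0 i, hδpos, fun t ht => ?_⟩
      have := hx0min (⟨hmemK t ht, hfc t ht⟩ : m t ∈ K')
      simpa [hψdef, hφdef] using this
    obtain ⟨t0, ht0, hres⟩ := fpdc_up g ψ (2 + R) hg hgpos hgB hgmin ε hε
    refine ⟨t0, ht0, fun t ht => ?_⟩
    have := hres t ht
    simp only [hgdef] at this
    linarith
  -- combine
  rw [Metric.tendsto_atTop]
  intro ε hε
  obtain ⟨t0, ht0, h1⟩ := hlow ε hε
  obtain ⟨t1, ht1, h2⟩ := hhigh ε hε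
  refine ⟨max t0 t1, fun t ht => ?_⟩
  have hta := h1 t (le_trans (le_max_left _ _) ht)
  have htb := h2 t (le_trans (le_max_right _ _) ht)
  rw [Real.dist_eq, abs_sub_lt_iff]
  constructor <;> simp only [hfdef] at hta htb <;> linarith
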